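/- Max-min principle: for each k, t_{n−k+1} = max over k-dimensional right ℍ-subspaces E of ℍⁿ of the minimum of R(S,v) over nonzero v ∈ E, where t₁ ≤ … ≤ t_n are the eigenvalues of the Hermitian quaternionic matrix S. -/

import Mathlib

open Quaternion Matrix

section Aux

open MulOpposite


section Aux

set_option linter.unusedSectionVars false

variable {n : ℕ} {ι : Type*} [Fintype ι]

noncomputable def opEquiv (n : ℕ) : (Fin n → ℍ[ℝ]) ≃ₗ[ℍ[ℝ]ᵐᵒᵖ] (Fin n → ℍ[ℝ]ᵐᵒᵖ) where
  toFun v := fun i => op (v i)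
  invFun w := fun i => unop (w i)
  left_inv v := rfl
  right_inv w := rfl
  map_add' v w := rfl
  map_smul' m v := by
    funext i
    simp only [Pi.smul_apply, RingHom.id_apply, smul_eq_mul]
    rw [← op_unop m, op_smul_eq_mul, op_mul, op_unop]

noncomputable def piBasis (n : ℕ) : Module.Basis (Fin n) ℍ[ℝ]ᵐᵒᵖ (Fin n → ℍ[ℝ]) :=
  Module.Basis.ofEquivFun (opEquiv n)

instance (n : ℕ) : FiniteDimensional ℍ[ℝ]ᵐᵒᵖ (Fin n → ℍ[ℝ]) :=
  Module.Basis.finiteDimensional_of_finite (piBasis n)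

theorem finrank_pi_quat (n : ℕ) : Module.finrank ℍ[ℝ]ᵐᵒᵖ (Fin n → ℍ[ℝ]) = n := by
  rw [Module.finrank_eq_card_basis (piBasis n), Fintype.card_fin]

theorem dot_expand (u : Fin n → Fin n → ℍ[ℝ])
    (horth : ∀ i j, star (u i) ⬝ᵥ u j = if i = j then 1 else 0)
    (f : ι → Fin n) (hf : Function.Injective f) (c : ι → ℍ[ℝ])
    (j : ι) :
    star (fun l => ∑ i, u (f i) l * c i) ⬝ᵥ u (f j) = star (c j) := by
  simp only [dotProduct, Pi.star_apply, star_sum, StarMul.star_mul, Finset.sum_mul]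
  rw [Finset.sum_comm]
  have key : ∀ i : ι, ∑ l, (star (c i) * star (u (f i) l)) * u (f j) l
      = star (c i) * (star (u (f i)) ⬝ᵥ u (f j)) := by
    intro i
    rw [dotProduct, Finset.mul_sum]
    exact Finset.sum_congr rfl fun l _ => by rw [mul_assoc]; rfl
  calc ∑ i : ι, ∑ l, star (c i) * star (u (f i) l) * u (f j) l
      = ∑ i : ι, star (c i) * (if f i = f j then (1:ℍ[ℝ]) else 0) := by
        refine Finset.sum_congr rfl fun i _ => ?_
        rw [key i, horth]
    _ = star (c j) := by
        rw [Finset.sum_eq_single j]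
        · simp
        · intro i _ hij; simp [hf.ne hij]
        · intro h; simp at h

theorem dot_mul_right (v w : Fin n → ℍ[ℝ]) (a : ℍ[ℝ]) :
    v ⬝ᵥ (fun l => w l * a) = (v ⬝ᵥ w) * a := by
  simp [dotProduct, Finset.sum_mul, mul_assoc]

theorem mulVec_expand (S : Matrix (Fin n) (Fin n) ℍ[ℝ]) (t : Fin n → ℝ)
    (u : Fin n → Fin n → ℍ[ℝ])
    (heig : ∀ j, S.mulVec (u j) = fun l => u j l * (t j : ℍ[ℝ]))
    (f : ι → Fin n) (c : ι → ℍ[ℝ]) :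
    S.mulVec (fun l => ∑ i, u (f i) l * c i)
      = fun l => ∑ i, u (f i) l * ((t (f i) : ℍ[ℝ]) * c i) := by
  funext l
  simp only [mulVec, dotProduct, Finset.mul_sum]
  rw [Finset.sum_comm]
  refine Finset.sum_congr rfl fun i _ => ?_
  have : ∑ m, S l m * (u (f i) m * c i) = (S.mulVec (u (f i)) l) * c i := by
    simp [mulVec, dotProduct, Finset.sum_mul, mul_assoc]
  rw [this, heig (f i)]
  simp [mul_assoc]

theorem re_sum {s : Finset ι} (g : ι → ℍ[ℝ]) :
    (∑ i ∈ s, g i).re = ∑ i ∈ s, (g i).re :=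
  map_sum (QuaternionAlgebra.reₗ (-1 : ℝ) (0 : ℝ) (-1 : ℝ)) g s

theorem star_mul_coe_mul (a : ℍ[ℝ]) (r : ℝ) :
    star a * ((r : ℍ[ℝ]) * a) = ((r * normSq a : ℝ) : ℍ[ℝ]) := by
  rw [← mul_assoc, ← (Quaternion.coe_commute r (star a)).eq, mul_assoc,
    Quaternion.star_mul_self, ← Quaternion.coe_mul]

theorem sum_normsq (v : Fin n → ℍ[ℝ]) :
    (∑ i, ‖v i‖ ^ 2) = (star v ⬝ᵥ v).re := by
  simp only [dotProduct, Pi.star_apply, Quaternion.star_mul_self]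
  rw [re_sum]
  refine Finset.sum_congr rfl fun i _ => ?_
  rw [Quaternion.re_coe, sq, ← normSq_eq_norm_mul_self]

theorem dot_sum_right (v : Fin n → ℍ[ℝ]) (g : ι → Fin n → ℍ[ℝ]) :
    v ⬝ᵥ (fun l => ∑ i, g i l) = ∑ i, v ⬝ᵥ g i := by
  simp only [dotProduct, Finset.mul_sum]
  rw [Finset.sum_comm]

theorem rayleigh_num (S : Matrix (Fin n) (Fin n) ℍ[ℝ]) (t : Fin n → ℝ)
    (u : Fin n → Fin n → ℍ[ℝ])
    (horth : ∀ i j, star (u i) ⬝ᵥ u j = if i = j then 1 else 0)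
    (heig : ∀ j, S.mulVec (u j) = fun l => u j l * (t j : ℍ[ℝ]))
    (f : ι → Fin n) (hf : Function.Injective f) (c : ι → ℍ[ℝ]) :
    (star (fun l => ∑ i, u (f i) l * c i) ⬝ᵥ
      S.mulVec (fun l => ∑ i, u (f i) l * c i)).re
      = ∑ i, t (f i) * normSq (c i) := by
  rw [mulVec_expand S t u heig f c]
  have h1 : star (fun l => ∑ i, u (f i) l * c i) ⬝ᵥ
      (fun l => ∑ i, u (f i) l * ((t (f i) : ℍ[ℝ]) * c i))
      = ∑ i, ((t (f i) * normSq (c i) : ℝ) : ℍ[ℝ]) := by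
    have := dot_sum_right (star (fun l => ∑ i, u (f i) l * c i))
      (fun i l => u (f i) l * ((t (f i) : ℍ[ℝ]) * c i))
    rw [this]
    refine Finset.sum_congr rfl fun i _ => ?_
    rw [dot_mul_right, dot_expand u horth f hf c i, star_mul_coe_mul]
  rw [h1, re_sum]
  simp [Quaternion.re_coe]

theorem rayleigh_denom (u : Fin n → Fin n → ℍ[ℝ])
    (horth : ∀ i j, star (u i) ⬝ᵥ u j = if i = j then 1 else 0)
    (f : ι → Fin n) (hf : Function.Injective f) (c : ι → ℍ[ℝ]) :
    (∑ l, ‖∑ i, u (f i) l * c i‖ ^ 2) = ∑ i, normSq (c i) := by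
  rw [sum_normsq]
  have h1 : star (fun l => ∑ i, u (f i) l * c i) ⬝ᵥ (fun l => ∑ i, u (f i) l * c i)
      = ∑ i, ((normSq (c i) : ℝ) : ℍ[ℝ]) := by
    have := dot_sum_right (star (fun l => ∑ i, u (f i) l * c i))
      (fun i l => u (f i) l * c i)
    rw [this]
    refine Finset.sum_congr rfl fun i _ => ?_
    rw [dot_mul_right, dot_expand u horth f hf c i, Quaternion.star_mul_self]
  rw [h1, re_sum]
  simp [Quaternion.re_coe]

theorem smul_sum_eq (u : Fin n → Fin n → ℍ[ℝ]) (f : ι → Fin n) (c : ι → ℍ[ℝ]ᵐᵒᵖ) :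
    (∑ i, c i • u (f i)) = fun l => ∑ i, u (f i) l * unop (c i) := by
  funext l
  rw [Finset.sum_apply]
  refine Finset.sum_congr rfl fun i _ => ?_
  rw [Pi.smul_apply, ← op_unop (c i), op_smul_eq_mul, op_unop]


theorem u_li (u : Fin n → Fin n → ℍ[ℝ])
    (horth : ∀ i j, star (u i) ⬝ᵥ u j = if i = j then 1 else 0)
    (f : ι → Fin n) (hf : Function.Injective f) :
    LinearIndependent ℍ[ℝ]ᵐᵒᵖ (fun i : ι => u (f i)) := by
  rw [Fintype.linearIndependent_iff]
  intro g hg i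
  rw [smul_sum_eq u f g] at hg
  have h2 := dot_expand u horth f hf (fun i => unop (g i)) i
  rw [hg] at h2
  simp only [Pi.star_apply, star_zero, zero_dotProduct] at h2
  have : unop (g i) = 0 := by
    have := congrArg star h2.symm
    simpa using this
  exact unop_injective (by simpa using this)

theorem mem_span_u (u : Fin n → Fin n → ℍ[ℝ]) (f : ι → Fin n)
    (v : Fin n → ℍ[ℝ])
    (hv : v ∈ Submodule.span ℍ[ℝ]ᵐᵒᵖ (Set.range fun i => u (f i))) :
    ∃ c : ι → ℍ[ℝ], v = fun l => ∑ i, u (f i) l * c i := by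
  rw [Submodule.mem_span_range_iff_exists_fun] at hv
  obtain ⟨c, hc⟩ := hv
  exact ⟨fun i => unop (c i), by rw [← hc, smul_sum_eq u f c]⟩

end Aux

theorem courant_fischer_max_min {n : ℕ}
    (S : Matrix (Fin n) (Fin n) ℍ[ℝ]) (hS : S.IsHermitian)
    (t : Fin n → ℝ) (ht : Monotone t) (u : Fin n → Fin n → ℍ[ℝ])
    (horth : ∀ i j, star (u i) ⬝ᵥ u j = if i = j then 1 else 0)
    (heig : ∀ j, S.mulVec (u j) = fun l => u j l * (t j : ℍ[ℝ]))
    (k : ℕ) (hk : 1 ≤ k) (hkn : k ≤ n) :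
    IsGreatest {m : ℝ | ∃ E : Submodule ℍ[ℝ]ᵐᵒᵖ (Fin n → ℍ[ℝ]),
        Module.finrank ℍ[ℝ]ᵐᵒᵖ E = k ∧
        IsLeast {r : ℝ | ∃ v ∈ E, v ≠ 0 ∧
          (star v ⬝ᵥ S.mulVec v).re / (∑ i, ‖v i‖ ^ 2) = r} m}
      (t ⟨n - k, by omega⟩) := by
  set m0 : Fin n := ⟨n - k, by omega⟩ with hm0
  -- positivity of the denominator for nonzero v
  have hpos : ∀ v : Fin n → ℍ[ℝ], v ≠ 0 → 0 < ∑ i, ‖v i‖ ^ 2 := by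
    intro v hv
    have : ∃ l, v l ≠ 0 := by
      by_contra h; push_neg at h; exact hv (funext h)
    obtain ⟨l, hl⟩ := this
    refine Finset.sum_pos' (fun i _ => by positivity) ⟨l, Finset.mem_univ l, ?_⟩
    exact pow_pos (norm_pos_iff.mpr hl) 2
  constructor
  · -- membership: take the span of the top k eigenvectors
    set f : Fin k → Fin n := fun i => ⟨n - k + i, by omega⟩ with hf
    have hfinj : Function.Injective f := by
      intro a b hab
      simp only [hf, Fin.mk.injEq] at hab
      omega
    refine ⟨Submodule.span ℍ[ℝ]ᵐᵒᵖ (Set.range fun i => u (f i)), ?_, ?_, ?_⟩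
    · rw [finrank_span_eq_card (u_li u horth f hfinj), Fintype.card_fin]
    · -- t m0 is attained at v = u m0
      have hm0f : m0 = f ⟨0, hk⟩ := by simp [hf, hm0]
      refine ⟨u m0, ?_, ?_, ?_⟩
      · rw [hm0f]; exact Submodule.subset_span ⟨⟨0, hk⟩, rfl⟩
      · intro h
        have h1 := horth m0 m0
        rw [h] at h1
        simp at h1
      · have hd : star (u m0) ⬝ᵥ u m0 = 1 := by rw [horth, if_pos rfl]
        rw [heig m0, dot_mul_right (star (u m0)) (u m0) ((t m0 : ℍ[ℝ])), hd, one_mul,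
          sum_normsq (u m0), hd]
        simp
    · -- lower bound on the Rayleigh quotients over the span
      rintro r ⟨v, hvE, hv0, rfl⟩
      obtain ⟨c, hc⟩ := mem_span_u u f v hvE
      have hW : 0 < ∑ i, ‖v i‖ ^ 2 := hpos v hv0
      rw [le_div_iff₀ hW]
      subst hc
      rw [rayleigh_num S t u horth heig f hfinj c, rayleigh_denom u horth f hfinj c] at *
      rw [Finset.mul_sum]
      refine Finset.sum_le_sum fun i _ => ?_
      have : t m0 ≤ t (f i) := ht (by simp [hf, hm0, Fin.mk_le_mk])
      nlinarith [Quaternion.normSq_nonneg (a := c i)]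
  · -- upper bound
    rintro m ⟨E, hEk, hleast⟩
    set g : Fin (n - k + 1) → Fin n := fun i => ⟨i, by omega⟩ with hg
    have hginj : Function.Injective g := by
      intro a b hab
      simp only [hg, Fin.mk.injEq] at hab
      exact Fin.ext hab
    set F := Submodule.span ℍ[ℝ]ᵐᵒᵖ (Set.range fun i => u (g i)) with hF
    have hFd : Module.finrank ℍ[ℝ]ᵐᵒᵖ F = n - k + 1 := by
      rw [hF, finrank_span_eq_card (u_li u horth g hginj), Fintype.card_fin]
    have hnd : ¬ Disjoint E F := by
      intro hd
      have := Submodule.finrank_add_finrank_le_of_disjoint hd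
      rw [hEk, hFd, finrank_pi_quat n] at this
      omega
    rw [disjoint_iff] at hnd
    obtain ⟨v, hvEF, hv0⟩ := Submodule.exists_mem_ne_zero_of_ne_bot hnd
    have hvE : v ∈ E := hvEF.1
    have hvF : v ∈ F := hvEF.2
    have h1 : m ≤ (star v ⬝ᵥ S.mulVec v).re / (∑ i, ‖v i‖ ^ 2) :=
      hleast.2 ⟨v, hvE, hv0, rfl⟩
    refine h1.trans ?_
    obtain ⟨c, hc⟩ := mem_span_u u g v hvF
    have hW : 0 < ∑ i, ‖v i‖ ^ 2 := hpos v hv0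
    rw [div_le_iff₀ hW]
    subst hc
    rw [rayleigh_num S t u horth heig g hginj c, rayleigh_denom u horth g hginj c] at *
    rw [Finset.mul_sum]
    refine Finset.sum_le_sum fun i _ => ?_
    have : t (g i) ≤ t m0 := ht (by simp [hg, hm0, Fin.mk_le_mk]; omega)
    nlinarith [Quaternion.normSq_nonneg (a := c i)]
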